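/- Let h : 𝒯 → 𝒜 be a homology theory that reflects isomorphisms and is full. Suppose given a morphism β : V → W in 𝒯, an object U of 𝒯, and a short exact sequence 0 → h(U) →α̂ h(V) →h(β) h(W) → 0 in 𝒜 whose second map is h(β). Then there exists a distinguished triangle U →α V →β W →γ U[1] in 𝒯 such that h(α) = α̂. -/

import Mathlib

open CategoryTheory Category Limits Pretriangulated

/-- (Dual realization lemma.)  Let `h` be a homology theory that reflects
isomorphisms and is full.  Given `β : V ⟶ W`, an object `U`, and a short exact sequence
`0 ⟶ h(U) ⟶α̂ h(V) ⟶h(β) h(W) ⟶ 0` in `𝒜` whose second map is `h(β)`, there is a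
distinguished triangle `U ⟶α V ⟶β W ⟶γ U⟦1⟧` with `h(α) = α̂`. -/
theorem realization_lemma_dual
    {T : Type*} [Category T] [HasZeroObject T] [Preadditive T] [HasShift T ℤ]
    [∀ n : ℤ, (shiftFunctor T n).Additive] [Pretriangulated T]
    {A : Type*} [Category A] [Abelian A] [HasShift A ℤ]
    [∀ n : ℤ, (shiftFunctor A n).Additive]
    (h : T ⥤ A) [h.Additive] [h.CommShift ℤ] [h.IsHomological]
    [h.ReflectsIsomorphisms] [h.Full]
    {V W : T} (β : V ⟶ W) (U : T) (αhat : h.obj U ⟶ h.obj V)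
    (w : αhat ≫ h.map β = 0)
    (hS : (ShortComplex.mk αhat (h.map β) w).ShortExact) :
    ∃ (α : U ⟶ V) (γ : W ⟶ U⟦(1:ℤ)⟧),
      (Triangle.mk α β γ ∈ distTriang T) ∧ h.map α = αhat := by
  have hmono : Mono αhat := hS.mono_f
  have hepi : Epi (h.map β) := hS.epi_g
  obtain ⟨Z, g, δ, hT⟩ := Pretriangulated.distinguished_cocone_triangle β
  set T₁ : Triangle T := Triangle.mk β g δ with hT₁def
  have hT1 : T₁.invRotate ∈ distTriang T := inv_rot_of_distTriang _ hT
  have hT2 : T₁.invRotate.invRotate ∈ distTriang T := inv_rot_of_distTriang _ hT1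
  -- h.map g = 0
  have hβg : β ≫ g = 0 := comp_distTriang_mor_zero₁₂ _ hT
  have hg0 : h.map g = 0 := by
    have : h.map β ≫ h.map g = 0 := by rw [← h.map_comp, hβg, h.map_zero]
    exact (cancel_epi (h.map β)).1 (by rw [this, comp_zero])
  -- h.map (g⟦-1⟧') = 0
  have hg1 : h.map (g⟦(-1:ℤ)⟧') = 0 := by
    have h1 := (h.commShiftIso (-1 : ℤ)).hom.naturality g
    simp only [Functor.comp_map, hg0, Functor.map_zero, comp_zero] at h1
    rw [← cancel_mono ((h.commShiftIso (-1 : ℤ)).hom.app Z), h1, zero_comp]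
  -- the first map of the double inverse rotation has vanishing image under h
  have hf0 : h.map (T₁.invRotate.invRotate.mor₁) = 0 := by
    have : T₁.invRotate.invRotate.mor₁ =
        -(T₁.invRotate.mor₃)⟦(-1:ℤ)⟧' ≫ (shiftEquiv T (1 : ℤ)).unitIso.inv.app _ := rfl
    have hm3 : T₁.invRotate.mor₃ = g ≫ (shiftEquiv T (1 : ℤ)).counitIso.inv.app _ := rfl
    rw [this]
    change h.map (-((g ≫ (shiftEquiv T (1 : ℤ)).counitIso.inv.app Z)⟦(-1:ℤ)⟧' ≫
      (shiftEquiv T (1 : ℤ)).unitIso.inv.app _)) = 0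
    simp only [Functor.map_comp, Preadditive.neg_comp, Functor.map_neg, h.map_neg,
      Functor.map_comp, assoc, hg1, zero_comp, neg_zero]
    rw [neg_eq_zero]
    exact (h.map_comp _ _).trans (by rw [h.map_comp, hg1, zero_comp, zero_comp])
  -- exactness at h.obj (Z⟦-1⟧) gives that h.map u is mono, where u = invRotate.mor₁
  set u : T₁.invRotate.obj₁ ⟶ V := T₁.invRotate.mor₁ with hu
  have ex3 := h.map_distinguished_exact _ hT2
  have hmonoU : Mono (h.map u) := ex3.mono_g hf0
  -- exactness at h.obj V
  have ex2 := h.map_distinguished_exact _ hT1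
  have hmonoU' : Mono ((shortComplexOfDistTriangle T₁.invRotate hT1).map h).f := hmonoU
  have huβ : h.map u ≫ h.map β = 0 := by
    have : u ≫ β = 0 := comp_distTriang_mor_zero₁₂ _ hT1
    rw [← h.map_comp, this, h.map_zero]
  -- comparison maps between the two kernels of h.map β
  have ψp := hS.exact.lift (h.map u) huβ
  have hψ : hS.exact.lift (h.map u) huβ ≫ αhat = h.map u := hS.exact.lift_f _ _
  set ψ := hS.exact.lift (h.map u) huβ with hψdef
  have hw' : αhat ≫ ((shortComplexOfDistTriangle T₁.invRotate hT1).map h).g = 0 := w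
  have φp := ex2.lift αhat hw'
  have hφ : ex2.lift αhat hw' ≫ h.map u = αhat := ex2.lift_f _ _
  set φ := ex2.lift αhat hw' with hφdef
  have hψφ : ψ ≫ φ = 𝟙 _ := by
    apply (cancel_mono (h.map u)).1
    exact (assoc ψ φ (h.map u)).trans ((congrArg (fun x => ψ ≫ x) hφ).trans (hψ.trans (id_comp _).symm))
  have hφψ : φ ≫ ψ = 𝟙 _ := by
    apply (cancel_mono αhat).1
    exact (assoc φ ψ αhat).trans ((congrArg (fun x => φ ≫ x) hψ).trans (hφ.trans (id_comp _).symm))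
  have : IsIso ψ := ⟨φ, hψφ, hφψ⟩
  -- reflect the iso ψ to T
  let f0 : T₁.invRotate.obj₁ ⟶ U := h.preimage ψ
  have hf0map : h.map f0 = ψ := h.map_preimage ψ
  have : IsIso (h.map f0) := by rw [hf0map]; infer_instance
  have hisof0 : IsIso f0 := isIso_of_reflects_iso f0 h
  -- build the triangle
  refine ⟨inv f0 ≫ u, T₁.invRotate.mor₃ ≫ f0⟦(1:ℤ)⟧', ?_, ?_⟩
  · refine isomorphic_distinguished _ hT1 _ (Iso.symm ?_)
    refine Triangle.isoMk _ _ (@asIso _ _ _ _ f0 hisof0) (Iso.refl V) (Iso.refl W) ?_ ?_ ?_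
    · show u ≫ (Iso.refl V).hom = (asIso f0).hom ≫ (inv f0 ≫ u)
      simp
    · show β ≫ (Iso.refl W).hom = (Iso.refl V).hom ≫ β
      simp
    · show T₁.invRotate.mor₃ ≫ (shiftFunctor T (1:ℤ)).map (asIso f0).hom =
        (Iso.refl W).hom ≫ (T₁.invRotate.mor₃ ≫ f0⟦(1:ℤ)⟧')
      simp
      rfl
  · have hepi0 : Epi (h.map f0) := by rw [hf0map]; infer_instance
    rw [← cancel_epi (h.map f0), ← h.map_comp, IsIso.hom_inv_id_assoc, hf0map, hψ]
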